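/- For any graph G, the sum over all vertices x of the number of edges spanned by the non-neighborhood of x equals mn + 3t - Σ_v d(v)², where m is the number of edges, t the number of triangles, and d(v) the degree of v. -/

import Mathlib

open Finset SimpleGraph

private lemma helper2 {α β : Type*} [Fintype α] [Fintype β] (R : α × β → Prop) [DecidablePred R] :
    (univ.filter R).card = ∑ a : α, (univ.filter fun b => R (a, b)).card := by
  rw [Finset.card_filter, Fintype.sum_prod_type]
  exact Finset.sum_congr rfl fun a _ => (Finset.card_filter _ _).symm

private lemma helper1 {α β : Type*} [Fintype α] [Fintype β] (Q : β → Prop) [DecidablePred Q]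
    (P : α → β → Prop) [∀ a b, Decidable (P a b)] :
    (univ.filter fun p : α × β => Q p.2 ∧ P p.1 p.2).card
      = ∑ b ∈ univ.filter Q, (univ.filter fun a => P a b).card := by
  rw [Finset.card_filter, Fintype.sum_prod_type, Finset.sum_comm, Finset.sum_filter]
  refine Finset.sum_congr rfl fun b _ => ?_
  by_cases hb : Q b
  · simp only [hb, true_and, Finset.card_filter, if_true]
  · simp [hb]

private lemma pair_sum_fst {V : Type*} [Fintype V] [DecidableEq V]
    (G : SimpleGraph V) [DecidableRel G.Adj] (f : V → ℝ) :
    ∑ p ∈ univ.filter (fun p : V × V => G.Adj p.1 p.2), f p.1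
      = ∑ v : V, (G.degree v : ℝ) * f v := by
  rw [Finset.sum_filter, Fintype.sum_prod_type]
  refine Finset.sum_congr rfl fun a _ => ?_
  show (∑ y : V, if G.Adj a y then f a else 0) = _
  rw [← Finset.sum_filter, Finset.sum_const, ← neighborFinset_eq_filter, nsmul_eq_mul]
  rfl

private lemma pair_sum_snd {V : Type*} [Fintype V] [DecidableEq V]
    (G : SimpleGraph V) [DecidableRel G.Adj] (f : V → ℝ) :
    ∑ p ∈ univ.filter (fun p : V × V => G.Adj p.1 p.2), f p.2
      = ∑ v : V, (G.degree v : ℝ) * f v := by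
  rw [← pair_sum_fst G f]
  refine Finset.sum_nbij' (fun p => Prod.swap p) (fun p => Prod.swap p) ?_ ?_ ?_ ?_ ?_ <;>
    simp [G.adj_comm]

private lemma edges_nonnbhd {V : Type*} [Fintype V] [DecidableEq V]
    (G : SimpleGraph V) [DecidableRel G.Adj] (x : V) :
    2 * (G.edgeFinset ∩ ((G.neighborFinset x)ᶜ).sym2).card
      = (univ.filter fun p : V × V =>
          G.Adj p.1 p.2 ∧ ¬G.Adj x p.1 ∧ ¬G.Adj x p.2).card := by
  let H : SimpleGraph V :=
    { Adj := fun a b => G.Adj a b ∧ ¬G.Adj x a ∧ ¬G.Adj x b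
      symm := ⟨fun a b ⟨h1, h2, h3⟩ => ⟨h1.symm, h3, h2⟩⟩
      loopless := ⟨fun a h => G.loopless.irrefl a h.1⟩ }
  haveI : DecidableRel H.Adj :=
    fun a b => inferInstanceAs (Decidable (G.Adj a b ∧ ¬G.Adj x a ∧ ¬G.Adj x b))
  have he : G.edgeFinset ∩ ((G.neighborFinset x)ᶜ).sym2 = H.edgeFinset := by
    ext e
    refine e.ind fun a b => ?_
    simp only [Finset.mem_inter, mem_edgeFinset, SimpleGraph.mem_edgeSet,
      Finset.mem_sym2_iff, Sym2.mem_iff, Finset.mem_compl, mem_neighborFinset]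
    constructor
    · rintro ⟨h1, h2⟩
      exact ⟨h1, h2 a (Or.inl rfl), h2 b (Or.inr rfl)⟩
    · rintro ⟨h1, h2, h3⟩
      refine ⟨h1, ?_⟩
      rintro y (rfl | rfl) <;> assumption
  rw [he, H.two_mul_card_edgeFinset]
  congr 1
  ext ⟨a, b⟩
  simp only [Finset.mem_filter, Finset.mem_univ, true_and]
  exact Iff.rfl

set_option maxHeartbeats 1000000 in
private lemma triangles_count {V : Type*} [Fintype V] [DecidableEq V]
    (G : SimpleGraph V) [DecidableRel G.Adj] :
    (univ.filter fun p : V × V × V =>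
        G.Adj p.2.1 p.2.2 ∧ G.Adj p.1 p.2.1 ∧ G.Adj p.1 p.2.2).card
      = 6 * (G.cliqueFinset 3).card := by
  rw [Finset.card_eq_sum_card_fiberwise
    (f := fun p : V × V × V => ({p.1, p.2.1, p.2.2} : Finset V)) (t := G.cliqueFinset 3)
    (by rintro ⟨x, a, b⟩ hp
        simp only [Finset.coe_filter, Set.mem_setOf_eq] at hp
        obtain ⟨-, hab, hxa, hxb⟩ := hp
        simp only [Finset.mem_coe]
        rw [mem_cliqueFinset_iff, is3Clique_triple_iff]
        exact ⟨hxa, hxb, hab⟩)]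
  rw [Finset.sum_congr rfl, Finset.sum_const, smul_eq_mul, mul_comm]
  intro s hs
  rw [mem_cliqueFinset_iff, is3Clique_iff] at hs
  obtain ⟨a, b, c, hab, hac, hbc, rfl⟩ := hs
  have h1 := hab.ne
  have h2 := hac.ne
  have h3 := hbc.ne
  have key : (univ.filter fun p : V × V × V =>
      G.Adj p.2.1 p.2.2 ∧ G.Adj p.1 p.2.1 ∧ G.Adj p.1 p.2.2).filter
        (fun p => ({p.1, p.2.1, p.2.2} : Finset V) = {a, b, c})
      = {(a,b,c), (a,c,b), (b,a,c), (b,c,a), (c,a,b), (c,b,a)} := by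
    ext ⟨x, y, z⟩
    simp only [mem_filter, mem_univ, true_and, mem_insert, mem_singleton, Prod.mk.injEq]
    constructor
    · rintro ⟨⟨hyz, hxy, hxz⟩, hset⟩
      have hx : x = a ∨ x = b ∨ x = c := by
        have := hset ▸ (Finset.mem_insert_self x {y, z})
        simpa using this
      have hy : y = a ∨ y = b ∨ y = c := by
        have : y ∈ ({x, y, z} : Finset V) := by simp
        rw [hset] at this; simpa using this
      have hz : z = a ∨ z = b ∨ z = c := by
        have : z ∈ ({x, y, z} : Finset V) := by simp
        rw [hset] at this; simpa using this
      have hxy' := hxy.ne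
      have hxz' := hxz.ne
      have hyz' := hyz.ne
      have ha : a ∈ ({x, y, z} : Finset V) := by rw [hset]; simp
      simp only [mem_insert, mem_singleton] at ha
      clear hset hxy hxz hyz
      rcases hx with rfl | rfl | rfl <;> rcases hy with rfl | rfl | rfl <;>
        rcases hz with rfl | rfl | rfl <;> tauto
    · rintro (⟨rfl, rfl, rfl⟩ | ⟨rfl, rfl, rfl⟩ | ⟨rfl, rfl, rfl⟩ | ⟨rfl, rfl, rfl⟩ |
        ⟨rfl, rfl, rfl⟩ | ⟨rfl, rfl, rfl⟩) <;>
      · refine ⟨⟨?_, ?_, ?_⟩, by ext w; simp only [mem_insert, mem_singleton]; try tauto⟩ <;>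
          first
            | exact hab | exact hac | exact hbc | exact hab.symm | exact hac.symm
            | exact hbc.symm
  rw [key]
  rw [card_insert_of_notMem (by simp [Prod.ext_iff]; tauto),
    card_insert_of_notMem (by simp [Prod.ext_iff]; tauto),
    card_insert_of_notMem (by simp [Prod.ext_iff]; tauto),
    card_insert_of_notMem (by simp [Prod.ext_iff]; tauto),
    card_insert_of_notMem (by simp [Prod.ext_iff]; tauto),
    card_singleton]

private lemma per_pair {V : Type*} [Fintype V] [DecidableEq V]
    (G : SimpleGraph V) [DecidableRel G.Adj] (a b : V) :
    ((univ.filter fun v => ¬G.Adj v a ∧ ¬G.Adj v b).card : ℝ)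
      = Fintype.card V - G.degree a - G.degree b
        + ((univ.filter fun v => G.Adj v a ∧ G.Adj v b).card : ℝ) := by
  have h1 : univ.filter (fun v => ¬G.Adj v a ∧ ¬G.Adj v b)
      = (G.neighborFinset a ∪ G.neighborFinset b)ᶜ := by
    ext v
    simp only [Finset.mem_filter, Finset.mem_univ, true_and, Finset.mem_compl,
      Finset.mem_union, mem_neighborFinset, not_or]
    rw [G.adj_comm a v, G.adj_comm b v]
  have h2 : univ.filter (fun v => G.Adj v a ∧ G.Adj v b)
      = G.neighborFinset a ∩ G.neighborFinset b := by
    ext v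
    simp only [Finset.mem_filter, Finset.mem_univ, true_and, Finset.mem_inter,
      mem_neighborFinset]
    rw [G.adj_comm a v, G.adj_comm b v]
  rw [h1, h2, Finset.card_compl,
    Nat.cast_sub (Finset.card_le_univ _)]
  have h3 := Finset.card_union_add_card_inter (G.neighborFinset a) (G.neighborFinset b)
  have h3' : ((G.neighborFinset a ∪ G.neighborFinset b).card : ℝ)
      + ((G.neighborFinset a ∩ G.neighborFinset b).card : ℝ)
      = G.degree a + G.degree b := by exact_mod_cast congrArg Nat.cast h3
  linarith

/-- For any graph `G` with `n` vertices, `m` edges and `t` triangles, the sum over all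
vertices `x` of the number of edges spanned by the non-neighborhood of `x` (the set of
vertices, including `x` itself, not adjacent to `x`) equals `mn + 3t - Σ_v d(v)²`. -/
theorem sum_nonneighborhood_edges {V : Type*} [Fintype V] [DecidableEq V]
    (G : SimpleGraph V) [DecidableRel G.Adj] (n m t : ℕ) (hn : Fintype.card V = n)
    (hm : G.edgeFinset.card = m) (ht : (G.cliqueFinset 3).card = t) :
    (∑ x : V, ((G.edgeFinset ∩ ((G.neighborFinset x)ᶜ).sym2).card : ℝ))
      = m * n + 3 * t - ∑ v : V, (G.degree v : ℝ) ^ 2 := by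
  have hE : (univ.filter fun q : V × V => G.Adj q.1 q.2).card = 2 * m := by
    rw [← hm, ← G.two_mul_card_edgeFinset]
  -- Step 1 : 2 * LHS = number of triples (x, a, b) with a~b, x≁a, x≁b
  have step1 : (2:ℝ) * ∑ x : V, ((G.edgeFinset ∩ ((G.neighborFinset x)ᶜ).sym2).card : ℝ)
      = ((univ.filter fun p : V × V × V =>
          G.Adj p.2.1 p.2.2 ∧ ¬G.Adj p.1 p.2.1 ∧ ¬G.Adj p.1 p.2.2).card : ℝ) := by
    rw [Finset.mul_sum,
      helper2 (fun p : V × (V × V) =>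
        G.Adj p.2.1 p.2.2 ∧ ¬G.Adj p.1 p.2.1 ∧ ¬G.Adj p.1 p.2.2)]
    push_cast
    refine Finset.sum_congr rfl fun x _ => ?_
    exact_mod_cast congrArg (Nat.cast (R := ℝ)) (edges_nonnbhd G x)
  -- Step 2 : count the triples the other way
  have step2 : ((univ.filter fun p : V × V × V =>
        G.Adj p.2.1 p.2.2 ∧ ¬G.Adj p.1 p.2.1 ∧ ¬G.Adj p.1 p.2.2).card : ℝ)
      = ∑ q ∈ univ.filter (fun q : V × V => G.Adj q.1 q.2),
          ((univ.filter fun v => ¬G.Adj v q.1 ∧ ¬G.Adj v q.2).card : ℝ) := by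
    rw [helper1 (fun q : V × V => G.Adj q.1 q.2)
      (fun v (q : V × V) => ¬G.Adj v q.1 ∧ ¬G.Adj v q.2)]
    push_cast
    rfl
  have step3 : ∑ q ∈ univ.filter (fun q : V × V => G.Adj q.1 q.2),
        ((univ.filter fun v => G.Adj v q.1 ∧ G.Adj v q.2).card : ℝ) = 6 * t := by
    have := helper1 (fun q : V × V => G.Adj q.1 q.2)
      (fun v (q : V × V) => G.Adj v q.1 ∧ G.Adj v q.2)
    rw [triangles_count G, ht] at this
    exact_mod_cast congrArg (Nat.cast (R := ℝ)) this.symm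
  have step4 : ∑ q ∈ univ.filter (fun q : V × V => G.Adj q.1 q.2),
        ((univ.filter fun v => ¬G.Adj v q.1 ∧ ¬G.Adj v q.2).card : ℝ)
      = 2 * m * n + 6 * t - 2 * ∑ v : V, (G.degree v : ℝ) ^ 2 := by
    rw [Finset.sum_congr rfl fun q _ => per_pair G q.1 q.2]
    rw [show ∀ s : Finset (V × V), ∀ f g : V × V → ℝ,
        ∑ q ∈ s, (f q + g q) = ∑ q ∈ s, f q + ∑ q ∈ s, g q from
      fun s f g => Finset.sum_add_distrib]
    rw [step3]
    have e1 : ∑ q ∈ univ.filter (fun q : V × V => G.Adj q.1 q.2),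
        ((Fintype.card V : ℝ) - G.degree q.1 - G.degree q.2)
        = 2 * m * n - 2 * ∑ v : V, (G.degree v : ℝ) ^ 2 := by
      rw [show ∀ s : Finset (V × V), ∀ f g : V × V → ℝ,
          ∑ q ∈ s, (f q - g q) = ∑ q ∈ s, f q - ∑ q ∈ s, g q from
        fun s f g => Finset.sum_sub_distrib f g,
        show ∀ s : Finset (V × V), ∀ f g : V × V → ℝ,
          ∑ q ∈ s, (f q - g q) = ∑ q ∈ s, f q - ∑ q ∈ s, g q from
        fun s f g => Finset.sum_sub_distrib f g]
      rw [Finset.sum_const, hE, hn,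
        pair_sum_fst G (fun v => (G.degree v : ℝ)),
        pair_sum_snd G (fun v => (G.degree v : ℝ))]
      have : ∑ v : V, (G.degree v : ℝ) * (G.degree v : ℝ)
          = ∑ v : V, (G.degree v : ℝ) ^ 2 := by
        refine Finset.sum_congr rfl fun v _ => (sq (G.degree v : ℝ)).symm
      rw [this]
      ring
    rw [e1]
    ring
  have final : (2:ℝ) * ∑ x : V, ((G.edgeFinset ∩ ((G.neighborFinset x)ᶜ).sym2).card : ℝ)
      = 2 * m * n + 6 * t - 2 * ∑ v : V, (G.degree v : ℝ) ^ 2 := by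
    rw [step1, step2, step4]
  linarith
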